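/- Let A00, A0, A1 be complete subalgebras of a complete Boolean algebra A with A00 ⊆ A0 and A00 ⊆ A1, and assume projections in the diagram (A00; A0, A1; A) are correct, i.e., whenever a0 ∈ A0 and a1 ∈ A1 are nonzero with h_{A00}(a0) = h_{A00}(a1), then a0 ⊓ a1 ≠ ⊥. Then A00 = A0 ∩ A1. -/
import Mathlib


/-- A complete subalgebra of a complete Boolean algebra `A`: a subset containing `⊥`,
closed under complementation and under suprema of arbitrary subsets. -/
structure CompleteSubalgebra {A : Type*} [CompleteBooleanAlgebra A] (S : Set A) : Prop where
  bot_mem : ⊥ ∈ S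
  compl_mem : ∀ a ∈ S, aᶜ ∈ S
  sSup_mem : ∀ T ⊆ S, sSup T ∈ S

/-- The projection onto a complete subalgebra: `h_S(a) = sInf {s ∈ S : a ≤ s}`. -/
def projSub {A : Type*} [CompleteBooleanAlgebra A] (S : Set A) (a : A) : A :=
  sInf {s | s ∈ S ∧ a ≤ s}

section Aux
variable {A : Type*} [CompleteBooleanAlgebra A] {S : Set A}

lemma CompleteSubalgebra.sup_mem (h : CompleteSubalgebra S) {x y : A}
    (hx : x ∈ S) (hy : y ∈ S) : x ⊔ y ∈ S := by
  have := h.sSup_mem {x, y} (by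
    intro z hz
    rcases hz with rfl | hz
    · exact hx
    · rcases hz with rfl; exact hy)
  simpa using this

lemma CompleteSubalgebra.inf_mem (h : CompleteSubalgebra S) {x y : A}
    (hx : x ∈ S) (hy : y ∈ S) : x ⊓ y ∈ S := by
  have := h.compl_mem _ (h.sup_mem (h.compl_mem _ hx) (h.compl_mem _ hy))
  simpa using this

lemma CompleteSubalgebra.sInf_mem (h : CompleteSubalgebra S) {T : Set A}
    (hT : T ⊆ S) : sInf T ∈ S := by
  have h1 : sInf T = (sSup (compl '' T))ᶜ := by
    rw [sSup_image, ← compl_sInf, compl_compl]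
  rw [h1]
  exact h.compl_mem _ (h.sSup_mem _ (by
    rintro z ⟨t, ht, rfl⟩; exact h.compl_mem _ (hT ht)))

lemma le_projSub (a : A) : a ≤ projSub S a :=
  le_sInf fun _ hs => hs.2

lemma projSub_mem (h : CompleteSubalgebra S) (a : A) : projSub S a ∈ S :=
  h.sInf_mem fun _ hs => hs.1

lemma projSub_le {s a : A} (hs : s ∈ S) (hle : a ≤ s) : projSub S a ≤ s :=
  sInf_le ⟨hs, hle⟩

/-- Key lemma: if `c ∈ S` and `c ≤ projSub S a`, then `projSub S (c ⊓ a) = c`. -/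
lemma projSub_inf_eq (h : CompleteSubalgebra S) {c a : A} (hc : c ∈ S)
    (hle : c ≤ projSub S a) : projSub S (c ⊓ a) = c := by
  apply le_antisymm (projSub_le hc inf_le_left)
  apply le_sInf
  rintro s ⟨hsS, hs⟩
  have ha : a ≤ s ⊔ cᶜ := by
    have : a ⊓ c ≤ s := by rwa [inf_comm] at hs
    rwa [← le_himp_iff, himp_eq] at this
  have : projSub S a ≤ s ⊔ cᶜ := projSub_le (h.sup_mem hsS (h.compl_mem _ hc)) ha
  calc c = c ⊓ projSub S a := (inf_eq_left.mpr hle).symm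
    _ ≤ c ⊓ (s ⊔ cᶜ) := inf_le_inf_left _ this
    _ ≤ s := by
        rw [inf_sup_left]
        simp

end Aux

theorem correct_implies_inter {A : Type*} [CompleteBooleanAlgebra A]
    (A00 A0 A1 : Set A)
    (h00 : CompleteSubalgebra A00) (h0 : CompleteSubalgebra A0)
    (h1 : CompleteSubalgebra A1)
    (h00_0 : A00 ⊆ A0) (h00_1 : A00 ⊆ A1)
    (hcorrect : ∀ a0 ∈ A0, ∀ a1 ∈ A1, a0 ≠ ⊥ → a1 ≠ ⊥ →
      projSub A00 a0 = projSub A00 a1 → a0 ⊓ a1 ≠ ⊥) :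
    A00 = A0 ∩ A1 := by
  apply le_antisymm
  · exact fun a ha => ⟨h00_0 ha, h00_1 ha⟩
  · rintro a ⟨ha0, ha1⟩
    set p := projSub A00 a with hp
    have hpmem : p ∈ A00 := projSub_mem h00 a
    set b := p ⊓ aᶜ with hbdef
    have hb : b = ⊥ := by
      by_contra hb
      -- b ∈ A0
      have hbA0 : b ∈ A0 := h0.inf_mem (h00_0 hpmem) (h0.compl_mem _ ha0)
      -- h(b) ≤ p
      have hble : b ≤ p := inf_le_left
      have hqle : projSub A00 b ≤ p := projSub_le hpmem hble
      set q := projSub A00 b with hq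
      have hqmem : q ∈ A00 := projSub_mem h00 b
      -- a1 := a ⊓ q ∈ A1
      have ha1mem : a ⊓ q ∈ A1 := h1.inf_mem ha1 (h00_1 hqmem)
      -- a ⊓ q ≠ ⊥
      have hne : a ⊓ q ≠ ⊥ := by
        intro hcon
        have : a ≤ qᶜ := (disjoint_iff.mpr hcon).le_compl_right
        have hpq : p ≤ qᶜ := projSub_le (h00.compl_mem _ hqmem) this
        have : q ≤ qᶜ := le_trans hqle hpq
        have hqbot : q = ⊥ := by
          have := le_inf (le_refl q) this
          simpa using this
        exact hb (le_bot_iff.mp (le_trans (le_projSub b) (le_of_eq hqbot)))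
      -- projections agree: projSub b = q = projSub (q ⊓ a)
      have hproj : projSub A00 b = projSub A00 (a ⊓ q) := by
        rw [inf_comm]
        exact (projSub_inf_eq h00 hqmem (le_trans hqle (by
          -- q ≤ projSub A00 a  (since p = projSub A00 a)
          exact le_of_eq hp))).symm ▸ rfl
      have := hcorrect b hbA0 (a ⊓ q) ha1mem hb hne hproj
      apply this
      have : b ⊓ a = ⊥ := by
        rw [hbdef, inf_assoc]
        simp
      rw [← inf_assoc, this, bot_inf_eq]
    have hpa : p ≤ a := by
      have := (disjoint_iff.mpr hb).le_compl_right
      rwa [compl_compl] at this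
    have : a = p := le_antisymm (le_projSub a) hpa
    rw [this]; exact hpmem
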